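/- Assume τ = 0. Then for every Λ ∈ S_{n,δ}, θ̄(Λ) is defined and θ̄(Λ) = θ_0(Λ). -/

import Mathlib

namespace PanUnitary

/-- `part μ i` : the `i`-th largest element (0-indexed) of the multiset `μ`, `0` beyond.
Viewing a multiset of naturals as a partition (identified up to trailing zeros),
this is the `(i+1)`-st part. -/
def part (μ : Multiset ℕ) (i : ℕ) : ℕ := ((μ.sort (· ≤ ·)).reverse).getD i 0

/-- Remove the zero parts: the canonical (zero-free) representative of a partition. -/
def strip (μ : Multiset ℕ) : Multiset ℕ := μ.filter (fun x => 0 < x)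

/-- `transpose μ j` is the `(j+1)`-st part of the transposed (conjugate) partition. -/
def transpose (μ : Multiset ℕ) (j : ℕ) : ℕ := (μ.filter (fun x => j < x)).card

/-- `Preceq f g` : the partition whose parts are given by `f` is `⪯` the one given by `g`,
i.e. `g i - 1 ≤ f i ≤ g i` for all `i`. -/
def Preceq (f g : ℕ → ℕ) : Prop := ∀ i, g i ≤ f i + 1 ∧ f i ≤ g i

/-- An integer `δ` is admissible if it is even and nonnegative, or odd and negative. -/
def IsAdmissible (δ : ℤ) : Prop := (Even δ ∧ 0 ≤ δ) ∨ (Odd δ ∧ δ < 0)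

/-- `ε = 1` if `δ` is even, `ε = 0` if `δ` is odd. -/
def eps (δ : ℤ) : ℕ := if Even δ then 1 else 0

/-- `d (d + 1) / 2` where `d = |δ|`. -/
def halfTri (δ : ℤ) : ℕ := δ.natAbs * (δ.natAbs + 1) / 2

/-- A symbol: a pair of rows of natural numbers (the strict-decrease condition is
part of the predicate `Symbol.IsUnitary`). -/
structure Symbol where
  A : List ℕ
  B : List ℕ

def Symbol.defect (Λ : Symbol) : ℤ := (Λ.A.length : ℤ) - (Λ.B.length : ℤ)

/-- The row `(a_1, …, a_m)` gives the partition with parts `(a_i - e)/2 - (m - i)`. -/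
def upsRow (L : List ℕ) (e : ℕ) : Multiset ℕ :=
  ((L.mapIdx fun i a => (a - e) / 2 - (L.length - 1 - i) : List ℕ) : Multiset ℕ)

/-- The bipartition `Υ(Λ)` (canonical zero-free representatives). -/
def Symbol.Upsilon (Λ : Symbol) : Multiset ℕ × Multiset ℕ :=
  (strip (upsRow Λ.A (eps Λ.defect)), strip (upsRow Λ.B (1 - eps Λ.defect)))

/-- `Λ` is a unitary-type symbol of (admissible) defect `δ`. -/
def Symbol.IsUnitary (Λ : Symbol) (δ : ℤ) : Prop :=
  Λ.A.Pairwise (· > ·) ∧ Λ.B.Pairwise (· > ·) ∧ Λ.defect = δ ∧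
    (∀ a ∈ Λ.A, a % 2 = eps δ) ∧ (∀ b ∈ Λ.B, b % 2 = 1 - eps δ)

/-- The rank `2(|μ| + |ν|) + d(d+1)/2` of a unitary-type symbol. -/
def Symbol.rank (Λ : Symbol) : ℕ :=
  2 * (Λ.Upsilon.1.sum + Λ.Upsilon.2.sum) + halfTri Λ.defect

/-- Equivalence of symbols: same defect and same `Υ`. -/
def Symbol.Equiv (Λ Λ' : Symbol) : Prop :=
  Λ.defect = Λ'.defect ∧ Λ.Upsilon = Λ'.Upsilon

/-- Membership in `S_{n,δ}`: a unitary-type symbol of admissible defect `δ` and rank `n`. -/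
def InS (n : ℕ) (δ : ℤ) (Λ : Symbol) : Prop :=
  IsAdmissible δ ∧ Λ.IsUnitary δ ∧ Λ.rank = n

/-- `Σ min(x,y)` over all unordered pairs of (positions of) entries of the list. -/
def pairMinSum : List ℕ → ℕ
  | [] => 0
  | x :: xs => (xs.map (fun y => min x y)).sum + pairMinSum xs

/-- All entries of a symbol (both rows). -/
def Symbol.entries (Λ : Symbol) : List ℕ := Λ.A ++ Λ.B

/-- `ord(Λ) = Σ min(x,y) − Σ_{i=1}^{⌊N/2⌋} (N − 2i)²`. -/
def Symbol.ord (Λ : Symbol) : ℤ :=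
  (pairMinSum Λ.entries : ℤ) -
    ∑ i ∈ Finset.Icc 1 (Λ.entries.length / 2),
      ((Λ.entries.length : ℤ) - 2 * (i : ℤ)) ^ 2

/-- The shift of a unitary-type symbol. -/
def Symbol.shift (Λ : Symbol) : Symbol :=
  ⟨Λ.A.map (fun a => a + 2) ++ [eps Λ.defect],
   Λ.B.map (fun b => b + 2) ++ [1 - eps Λ.defect]⟩

/-- The defect `δ'` for the second member of the dual pair. -/
def deltaPrime (n n' : ℕ) (δ : ℤ) : ℤ :=
  if Even (n + n') then (if δ = 0 then 0 else -δ + 1) else -δ - 1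

/-- `τ = ((n' − d'(d'+1)/2) − (n − d(d+1)/2)) / 2`. -/
def tau (n n' : ℕ) (δ : ℤ) : ℚ :=
  (((n' : ℚ) - (halfTri (deltaPrime n n' δ) : ℚ)) - ((n : ℚ) - (halfTri δ : ℚ))) / 2

/-- `τ` as a natural number (equal to `τ` whenever `τ` is a nonnegative integer). -/
def tauNat (n n' : ℕ) (δ : ℤ) : ℕ :=
  ((n' + halfTri δ) - (n + halfTri (deltaPrime n n' δ))) / 2

/-- The set of (canonical, zero-free) bipartitions `(μ;ν)` with
`2(|μ|+|ν|) + d(d+1)/2 = n`; equivalently `|μ|+|ν| = (n − d(d+1)/2)/2`. -/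
def BipSet (n : ℕ) (δ : ℤ) : Set (Multiset ℕ × Multiset ℕ) :=
  {p | (∀ x ∈ p.1, 0 < x) ∧ (∀ x ∈ p.2, 0 < x) ∧ 2 * (p.1.sum + p.2.sum) + halfTri δ = n}

/-- The `⪯`-conditions (on transposes) defining the relation `Θ`, at the level of
bipartitions `p = Υ(Λ)`, `q = Υ(Λ')`. -/
def PrecCond (n n' : ℕ) (p q : Multiset ℕ × Multiset ℕ) : Prop :=
  if Even (n + n') then
    Preceq (transpose p.2) (transpose q.1) ∧ Preceq (transpose q.2) (transpose p.1)
  else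
    Preceq (transpose p.1) (transpose q.2) ∧ Preceq (transpose q.1) (transpose p.2)

/-- `Θ` at the level of bipartitions (classes of symbols). -/
def ThetaB (n n' : ℕ) (δ : ℤ) (p q : Multiset ℕ × Multiset ℕ) : Prop :=
  q ∈ BipSet n' (deltaPrime n n' δ) ∧ PrecCond n n' p q

/-- `Λ' ∈ Θ(Λ)` for symbols, where `Λ ∈ S_{n,δ}`. -/
def InTheta (n n' : ℕ) (δ : ℤ) (Λ Λ' : Symbol) : Prop :=
  InS n' (deltaPrime n n' δ) Λ' ∧ PrecCond n n' Λ.Upsilon Λ'.Upsilon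

/-- `Λ' ∈ Θ(Λ)_k`. -/
def InThetaK (n n' : ℕ) (δ : ℤ) (k : ℕ) (Λ Λ' : Symbol) : Prop :=
  InTheta n n' δ Λ Λ' ∧
    (if Even (n + n') then (Λ'.Upsilon.2.sum : ℤ) = (Λ.Upsilon.1.sum : ℤ) - (k : ℤ)
     else (Λ'.Upsilon.1.sum : ℤ) = (Λ.Upsilon.2.sum : ℤ) - (k : ℤ))

/-- Remove (one copy of) the largest part. -/
def mtail (μ : Multiset ℕ) : Multiset ℕ := μ.erase (part μ 0)

/-- `θ_k` at the level of bipartitions: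
even case: `(μ;ν) ↦ (sort(ν, τ+k); sort(μ_2, …, μ_{m_1}, μ_1 − k))`;
odd case: `(μ;ν) ↦ (sort(ν_2, …, ν_{m_2}, ν_1 − k); sort(μ, τ+k))`. -/
def thetaBip (n n' : ℕ) (δ : ℤ) (k : ℕ) (p : Multiset ℕ × Multiset ℕ) :
    Multiset ℕ × Multiset ℕ :=
  if Even (n + n') then
    (strip ((tauNat n n' δ + k) ::ₘ p.2), strip ((part p.1 0 - k) ::ₘ mtail p.1))
  else
    (strip ((part p.2 0 - k) ::ₘ mtail p.2), strip ((tauNat n n' δ + k) ::ₘ p.1))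

/-- The unitary-type symbol of defect `δ` with `Υ = p`, whose first row has `m1`
entries and second row `m2` entries (valid whenever `m1, m2` are large enough). -/
def symbolOfBip (δ : ℤ) (p : Multiset ℕ × Multiset ℕ) (m1 m2 : ℕ) : Symbol :=
  ⟨List.ofFn (fun i : Fin m1 => 2 * (part p.1 (i : ℕ) + (m1 - 1 - (i : ℕ))) + eps δ),
   List.ofFn (fun j : Fin m2 => 2 * (part p.2 (j : ℕ) + (m2 - 1 - (j : ℕ))) + (1 - eps δ))⟩

/-- A canonical representative symbol of defect `δ` with `Υ = p`. -/
def canonicalSymbol (δ : ℤ) (p : Multiset ℕ × Multiset ℕ) : Symbol :=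
  symbolOfBip δ p (max p.1.card ((p.2.card : ℤ) + δ).toNat)
    (((max p.1.card ((p.2.card : ℤ) + δ).toNat : ℤ) - δ).toNat)

/-- A symbol representing the class `θ_k(Λ)`. -/
def thetaSymbol (n n' : ℕ) (δ : ℤ) (k : ℕ) (Λ : Symbol) : Symbol :=
  canonicalSymbol (deltaPrime n n' δ) (thetaBip n n' δ k Λ.Upsilon)

/-- `K(Λ)`: `μ_1` in the even case, `ν_1` in the odd case. -/
def bigK (n n' : ℕ) (Λ : Symbol) : ℕ :=
  if Even (n + n') then part Λ.Upsilon.1 0 else part Λ.Upsilon.2 0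

/-- `ord` at the level of bipartitions (well defined on classes). -/
def ordB (δ : ℤ) (p : Multiset ℕ × Multiset ℕ) : ℤ := (canonicalSymbol δ p).ord

/-- Strict lexicographic order on partitions. -/
def PartLexLt (μ ν : Multiset ℕ) : Prop :=
  ∃ i, (∀ j < i, part μ j = part ν j) ∧ part μ i < part ν i

/-- The total order on `S_{n,δ}` (and on `S_{n',δ'}`), at the level of bipartitions;
it depends only on the parity of `n + n'`. -/
def BLt (n n' : ℕ) (p q : Multiset ℕ × Multiset ℕ) : Prop :=
  if Even (n + n') then
    p.1.sum < q.1.sum ∨ (p.1.sum = q.1.sum ∧ PartLexLt p.1 q.1) ∨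
      (p.1 = q.1 ∧ PartLexLt p.2 q.2)
  else
    p.2.sum < q.2.sum ∨ (p.2.sum = q.2.sum ∧ PartLexLt p.2 q.2) ∨
      (p.2 = q.2 ∧ PartLexLt p.1 q.1)

/-- `q ∈ Θ♭(p)` relative to a given partial function `bar` (playing the role of `θ̄`). -/
def InFlat (n n' : ℕ) (δ : ℤ)
    (bar : Multiset ℕ × Multiset ℕ → Option (Multiset ℕ × Multiset ℕ))
    (p q : Multiset ℕ × Multiset ℕ) : Prop :=
  ThetaB n n' δ p q ∧ ∀ r ∈ BipSet n δ, BLt n n' r p → bar r ≠ some q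

/-- `bar` is the partial function `θ̄` defined by recursion along the total order:
on each `p ∈ S_{n,δ}`, if `Θ♭(p) ≠ ∅` then `bar p` is defined and is the smallest
element (w.r.t. the total order) of maximal `ord` in `Θ♭(p)`. -/
def IsThetaBar (n n' : ℕ) (δ : ℤ)
    (bar : Multiset ℕ × Multiset ℕ → Option (Multiset ℕ × Multiset ℕ)) : Prop :=
  (∀ p, p ∉ BipSet n δ → bar p = none) ∧
  ∀ p ∈ BipSet n δ,
    ((∃ q, InFlat n n' δ bar p q) → ∃ q, bar p = some q) ∧
    ∀ q, bar p = some q →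
      InFlat n n' δ bar p q ∧
      (∀ r, InFlat n n' δ bar p r →
        ordB (deltaPrime n n' δ) r ≤ ordB (deltaPrime n n' δ) q) ∧
      (∀ r, InFlat n n' δ bar p r →
        ordB (deltaPrime n n' δ) r = ordB (deltaPrime n n' δ) q → r ≠ q → BLt n n' q r)

/-! ### Auxiliary lemmas -/

lemma preceq_refl (f : ℕ → ℕ) : Preceq f f := fun _ => ⟨Nat.le_succ _, le_rfl⟩

lemma transpose_cons (a : ℕ) (s : Multiset ℕ) (j : ℕ) :
    transpose (a ::ₘ s) j = (if j < a then 1 else 0) + transpose s j := by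
  simp only [transpose, Multiset.filter_cons]
  split <;> simp [Nat.add_comm]

lemma sum_ite_lt (N a : ℕ) : (∑ j ∈ Finset.range N, if j < a then 1 else 0) = min a N := by
  induction N with
  | zero => simp
  | succ N ih => rw [Finset.sum_range_succ, ih]; split <;> omega

lemma sum_transpose (N : ℕ) (μ : Multiset ℕ) (h : ∀ x ∈ μ, x ≤ N) :
    (∑ j ∈ Finset.range N, transpose μ j) = μ.sum := by
  induction μ using Multiset.induction with
  | empty => simp [transpose]
  | cons a s ih =>
    simp only [transpose_cons, Finset.sum_add_distrib, sum_ite_lt, Multiset.sum_cons]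
    rw [ih (fun x hx => h x (Multiset.mem_cons_of_mem hx))]
    have ha : a ≤ N := h a (Multiset.mem_cons_self a s)
    omega

lemma mem_le_sum {μ : Multiset ℕ} {a : ℕ} (h : a ∈ μ) : a ≤ μ.sum :=
  Multiset.single_le_sum (fun x _ => Nat.zero_le x) a h

lemma sum_le_of_preceq {α β : Multiset ℕ} (h : Preceq (transpose α) (transpose β)) :
    α.sum ≤ β.sum := by
  set N := α.sum + β.sum with hN
  rw [← sum_transpose N α (fun x hx => le_trans (mem_le_sum hx) (by omega)),
      ← sum_transpose N β (fun x hx => le_trans (mem_le_sum hx) (by omega))]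
  exact Finset.sum_le_sum fun j _ => (h j).2

lemma transpose_eq_of_sum_eq {α β : Multiset ℕ} (h : Preceq (transpose α) (transpose β))
    (hs : α.sum = β.sum) : ∀ j, transpose α j = transpose β j := by
  intro j0
  by_contra hne
  have hlt : transpose α j0 < transpose β j0 := lt_of_le_of_ne (h j0).2 hne
  set N := α.sum + β.sum + j0 + 1 with hN
  have hsum : (∑ j ∈ Finset.range N, transpose α j) < ∑ j ∈ Finset.range N, transpose β j :=
    Finset.sum_lt_sum (fun j _ => (h j).2) ⟨j0, Finset.mem_range.2 (by omega), hlt⟩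
  rw [sum_transpose N α (fun x hx => le_trans (mem_le_sum hx) (by omega)),
      sum_transpose N β (fun x hx => le_trans (mem_le_sum hx) (by omega))] at hsum
  omega

lemma transpose_succ_count (μ : Multiset ℕ) (y : ℕ) :
    transpose μ y = Multiset.count (y + 1) μ + transpose μ (y + 1) := by
  induction μ using Multiset.induction with
  | empty => simp [transpose]
  | cons a s ih =>
    rw [transpose_cons, transpose_cons, Multiset.count_cons]
    split_ifs <;> omega

lemma eq_of_preceq {α β : Multiset ℕ} (h : Preceq (transpose α) (transpose β))
    (hs : α.sum = β.sum) (hα : ∀ x ∈ α, 0 < x) (hβ : ∀ x ∈ β, 0 < x) : α = β := by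
  have ht := transpose_eq_of_sum_eq h hs
  ext x
  cases x with
  | zero =>
    rw [Multiset.count_eq_zero.2 (fun hm => absurd (hα 0 hm) (lt_irrefl 0)),
        Multiset.count_eq_zero.2 (fun hm => absurd (hβ 0 hm) (lt_irrefl 0))]
  | succ y =>
    have h1 := transpose_succ_count α y
    have h2 := transpose_succ_count β y
    have h3 := ht y
    have h4 := ht (y + 1)
    omega

lemma part_mem {μ : Multiset ℕ} {j : ℕ} (h : j < Multiset.card μ) : part μ j ∈ μ := by
  unfold part
  have hl : ((μ.sort (· ≤ ·)).reverse).length = Multiset.card μ := by simp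
  rw [List.getD_eq_getElem _ _ (by omega)]
  exact (Multiset.mem_sort _).1 (List.mem_reverse.1 (List.getElem_mem _))

lemma part_eq_zero {μ : Multiset ℕ} {j : ℕ} (h : Multiset.card μ ≤ j) : part μ j = 0 :=
  List.getD_eq_default _ _ (by simpa using h)

lemma part_le_sum (μ : Multiset ℕ) (j : ℕ) : part μ j ≤ μ.sum := by
  rcases lt_or_ge j (Multiset.card μ) with h | h
  · exact mem_le_sum (part_mem h)
  · rw [part_eq_zero h]; exact Nat.zero_le _

lemma card_le_sum {μ : Multiset ℕ} (h : ∀ x ∈ μ, 0 < x) : Multiset.card μ ≤ μ.sum := by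
  induction μ using Multiset.induction with
  | empty => simp
  | cons a s ih =>
    simp only [Multiset.card_cons, Multiset.sum_cons]
    have h1 := h a (Multiset.mem_cons_self a s)
    have h2 := ih (fun x hx => h x (Multiset.mem_cons_of_mem hx))
    omega
/-- Lexicographic encoding of a partition with parts `≤ n` and at most `n` parts. -/
def eenc (n : ℕ) (μ : Multiset ℕ) : ℕ := ∑ j ∈ Finset.range n, part μ j * (n + 1) ^ (n - 1 - j)

lemma tail_lt (n : ℕ) (μ : Multiset ℕ) (hb : ∀ j, part μ j ≤ n) :
    ∀ d a, a + d = n → (∑ j ∈ Finset.Ico a n, part μ j * (n + 1) ^ (n - 1 - j)) < (n + 1) ^ d := by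
  intro d
  induction d with
  | zero =>
    intro a ha
    have : a = n := by omega
    subst this
    simp
  | succ d ih =>
    intro a ha
    rw [Finset.sum_eq_sum_Ico_succ_bot (by omega : a < n)]
    have h1 := ih (a + 1) (by omega)
    have h2 : part μ a ≤ n := hb a
    have h3 : n - 1 - a = d := by omega
    rw [h3, pow_succ]
    have h4 : part μ a * (n + 1) ^ d ≤ n * (n + 1) ^ d := Nat.mul_le_mul_right _ h2
    have h5 : (n + 1) ^ d * (n + 1) = n * (n + 1) ^ d + (n + 1) ^ d := by ring
    omega

lemma eenc_lt_pow (n : ℕ) (μ : Multiset ℕ) (hb : ∀ j, part μ j ≤ n) :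
    eenc n μ < (n + 1) ^ n := by
  have := tail_lt n μ hb n 0 (by omega)
  rw [eenc, Finset.range_eq_Ico]
  exact this

lemma eenc_lt (n : ℕ) {μ ν : Multiset ℕ} (hμ : ∀ j, part μ j ≤ n) (hν : ∀ j, part ν j ≤ n)
    (hcard : Multiset.card ν ≤ n) (h : PartLexLt μ ν) : eenc n μ < eenc n ν := by
  obtain ⟨i, hpre, hi⟩ := h
  have hin : i < n := by
    by_contra h'
    push_neg at h'
    have : part ν i = 0 := part_eq_zero (le_trans hcard h')
    omega
  have split : ∀ ρ : Multiset ℕ, eenc n ρ =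
      ((∑ j ∈ Finset.range i, part ρ j * (n + 1) ^ (n - 1 - j)) +
        part ρ i * (n + 1) ^ (n - 1 - i)) +
        ∑ j ∈ Finset.Ico (i + 1) n, part ρ j * (n + 1) ^ (n - 1 - j) := by
    intro ρ
    rw [eenc, Finset.range_eq_Ico,
      ← Finset.sum_Ico_consecutive _ (Nat.zero_le (i + 1)) (by omega : i + 1 ≤ n)]
    congr 1
    rw [Finset.sum_Ico_succ_top (Nat.zero_le i), ← Finset.range_eq_Ico]
  rw [split μ, split ν]
  have heads : (∑ j ∈ Finset.range i, part μ j * (n + 1) ^ (n - 1 - j)) =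
      ∑ j ∈ Finset.range i, part ν j * (n + 1) ^ (n - 1 - j) :=
    Finset.sum_congr rfl (fun j hj => by rw [hpre j (Finset.mem_range.1 hj)])
  have htail : (∑ j ∈ Finset.Ico (i + 1) n, part μ j * (n + 1) ^ (n - 1 - j)) <
      (n + 1) ^ (n - 1 - i) := by
    have := tail_lt n μ hμ (n - 1 - i) (i + 1) (by omega)
    exact this
  have hx : part μ i * (n + 1) ^ (n - 1 - i) + (n + 1) ^ (n - 1 - i) ≤
      part ν i * (n + 1) ^ (n - 1 - i) := by
    have := Nat.mul_le_mul_right ((n + 1) ^ (n - 1 - i)) (Nat.succ_le_of_lt hi)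
    rw [Nat.succ_mul] at this
    exact this
  omega

/-- The measure implementing the total order `BLt`. -/
def menc (n n' : ℕ) (p : Multiset ℕ × Multiset ℕ) : ℕ :=
  if Even (n + n') then
    (p.1.sum * (n + 1) ^ n + eenc n p.1) * (n + 1) ^ n + eenc n p.2
  else
    (p.2.sum * (n + 1) ^ n + eenc n p.2) * (n + 1) ^ n + eenc n p.1

lemma menc_step (A B e f X : ℕ) (h : A + 1 ≤ B) (h2 : e < X) :
    A * X + e < B * X + f := by
  have := Nat.mul_le_mul_right X h
  rw [Nat.succ_mul] at this
  omega

lemma bip_sum_le {n : ℕ} {δ : ℤ} {p : Multiset ℕ × Multiset ℕ} (hp : p ∈ BipSet n δ) :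
    p.1.sum ≤ n ∧ p.2.sum ≤ n := by
  obtain ⟨-, -, h⟩ := hp
  omega

lemma bip_part_le {n : ℕ} {δ : ℤ} {p : Multiset ℕ × Multiset ℕ} (hp : p ∈ BipSet n δ) :
    (∀ j, part p.1 j ≤ n) ∧ (∀ j, part p.2 j ≤ n) :=
  ⟨fun j => le_trans (part_le_sum _ j) (bip_sum_le hp).1,
   fun j => le_trans (part_le_sum _ j) (bip_sum_le hp).2⟩

lemma bip_card_le {n : ℕ} {δ : ℤ} {p : Multiset ℕ × Multiset ℕ} (hp : p ∈ BipSet n δ) :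
    Multiset.card p.1 ≤ n ∧ Multiset.card p.2 ≤ n :=
  ⟨le_trans (card_le_sum hp.1) (bip_sum_le hp).1,
   le_trans (card_le_sum hp.2.1) (bip_sum_le hp).2⟩

lemma menc_lt {n n' : ℕ} {δ : ℤ} {p q : Multiset ℕ × Multiset ℕ}
    (hp : p ∈ BipSet n δ) (hq : q ∈ BipSet n δ) (h : BLt n n' p q) :
    menc n n' p < menc n n' q := by
  have hep1 := eenc_lt_pow n p.1 (bip_part_le hp).1
  have hep2 := eenc_lt_pow n p.2 (bip_part_le hp).2
  by_cases hpar : Even (n + n')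
  · rw [BLt, if_pos hpar] at h
    rw [menc, menc, if_pos hpar, if_pos hpar]
    rcases h with h | ⟨h1, h2⟩ | ⟨h1, h2⟩
    · exact menc_step _ _ _ _ _ (by
        have := Nat.mul_le_mul_right ((n + 1) ^ n) (Nat.succ_le_of_lt h)
        rw [Nat.succ_mul] at this
        omega) hep2
    · refine menc_step _ _ _ _ _ ?_ hep2
      have he := eenc_lt n (bip_part_le hp).1 (bip_part_le hq).1 (bip_card_le hq).1 h2
      rw [h1]
      omega
    · rw [h1]
      have he := eenc_lt n (bip_part_le hp).2 (bip_part_le hq).2 (bip_card_le hq).2 h2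
      omega
  · rw [BLt, if_neg hpar] at h
    rw [menc, menc, if_neg hpar, if_neg hpar]
    rcases h with h | ⟨h1, h2⟩ | ⟨h1, h2⟩
    · exact menc_step _ _ _ _ _ (by
        have := Nat.mul_le_mul_right ((n + 1) ^ n) (Nat.succ_le_of_lt h)
        rw [Nat.succ_mul] at this
        omega) hep1
    · refine menc_step _ _ _ _ _ ?_ hep1
      have he := eenc_lt n (bip_part_le hp).2 (bip_part_le hq).2 (bip_card_le hq).2 h2
      rw [h1]
      omega
    · rw [h1]
      have he := eenc_lt n (bip_part_le hp).1 (bip_part_le hq).1 (bip_card_le hq).1 h2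
      omega

lemma blt_irrefl (n n' : ℕ) (p : Multiset ℕ × Multiset ℕ) : ¬ BLt n n' p p := by
  unfold BLt
  split <;>
  · rintro (h | ⟨-, i, -, h⟩ | ⟨-, i, -, h⟩) <;> omega
lemma key_eq {n n' : ℕ} {δ : ℤ} (hτ : tau n n' δ = 0) :
    n' + halfTri δ = n + halfTri (deltaPrime n n' δ) := by
  rw [tau, div_eq_zero_iff] at hτ
  have h : ((n' : ℚ) - (halfTri (deltaPrime n n' δ) : ℚ)) - ((n : ℚ) - (halfTri δ : ℚ)) = 0 := by
    rcases hτ with h | h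
    · exact h
    · norm_num at h
  have h2 : ((n' + halfTri δ : ℕ) : ℚ) = ((n + halfTri (deltaPrime n n' δ) : ℕ) : ℚ) := by
    push_cast
    linarith
  exact_mod_cast h2

lemma tauNat_zero {n n' : ℕ} {δ : ℤ} (hτ : tau n n' δ = 0) : tauNat n n' δ = 0 := by
  have := key_eq hτ
  rw [tauNat]
  omega

lemma strip_eq {μ : Multiset ℕ} (h : ∀ x ∈ μ, 0 < x) : strip μ = μ :=
  Multiset.filter_eq_self.2 h

lemma strip_cons_zero (μ : Multiset ℕ) : strip ((0 : ℕ) ::ₘ μ) = strip μ := by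
  rw [strip, Multiset.filter_cons_of_neg _ (by norm_num)]
  rfl

lemma reassemble {μ : Multiset ℕ} (h : ∀ x ∈ μ, 0 < x) :
    strip (part μ 0 ::ₘ mtail μ) = μ := by
  rcases eq_or_ne μ 0 with h0 | h0
  · subst h0
    have : part (0 : Multiset ℕ) 0 = 0 := part_eq_zero (by simp)
    rw [this, mtail, this]
    simp [strip, Multiset.filter_singleton]
  · have hmem : part μ 0 ∈ μ := part_mem (by
      have := Multiset.card_pos.2 h0
      omega)
    rw [mtail, Multiset.cons_erase hmem]
    exact strip_eq h

lemma thetaBip_zero {n n' : ℕ} {δ : ℤ} (hτ : tau n n' δ = 0)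
    {p : Multiset ℕ × Multiset ℕ} (hp : p ∈ BipSet n δ) :
    thetaBip n n' δ 0 p = (p.2, p.1) := by
  obtain ⟨h1, h2, -⟩ := hp
  rw [thetaBip, tauNat_zero hτ]
  simp only [Nat.add_zero, Nat.sub_zero]
  split
  · rw [strip_cons_zero, strip_eq h2, reassemble h1]
  · rw [strip_cons_zero, strip_eq h1, reassemble h2]

lemma precCond_swap (n n' : ℕ) (p : Multiset ℕ × Multiset ℕ) :
    PrecCond n n' p (p.2, p.1) := by
  rw [PrecCond]
  split <;> exact ⟨preceq_refl _, preceq_refl _⟩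

lemma swap_mem {n n' : ℕ} {δ : ℤ} (hτ : tau n n' δ = 0) {p : Multiset ℕ × Multiset ℕ}
    (hp : p ∈ BipSet n δ) : (p.2, p.1) ∈ BipSet n' (deltaPrime n n' δ) := by
  obtain ⟨h1, h2, h3⟩ := hp
  have key := key_eq hτ
  refine ⟨h2, h1, ?_⟩
  show 2 * (p.2.sum + p.1.sum) + _ = n'
  omega

lemma swap_mem' {n n' : ℕ} {δ : ℤ} (hτ : tau n n' δ = 0) {q : Multiset ℕ × Multiset ℕ}
    (hq : q ∈ BipSet n' (deltaPrime n n' δ)) : (q.2, q.1) ∈ BipSet n δ := by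
  obtain ⟨h1, h2, h3⟩ := hq
  have key := key_eq hτ
  refine ⟨h2, h1, ?_⟩
  show 2 * (q.2.sum + q.1.sum) + _ = n
  omega

/-- The main induction step: if `θ̄` agrees with the swap on all smaller classes,
then it is defined and equal to the swap at `p`. -/
lemma main_step {n n' : ℕ} {δ : ℤ} (hτ : tau n n' δ = 0)
    (bar : Multiset ℕ × Multiset ℕ → Option (Multiset ℕ × Multiset ℕ))
    (hbar : IsThetaBar n n' δ bar) {p : Multiset ℕ × Multiset ℕ} (hp : p ∈ BipSet n δ)
    (IH : ∀ r ∈ BipSet n δ, menc n n' r < menc n n' p → bar r = some (r.2, r.1)) :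
    bar p = some (p.2, p.1) := by
  have hswap : InFlat n n' δ bar p (p.2, p.1) := by
    refine ⟨⟨swap_mem hτ hp, precCond_swap n n' p⟩, ?_⟩
    intro r hr hlt heq
    rw [IH r hr (menc_lt hr hp hlt)] at heq
    have : r = p := by
      have h2 := Option.some_injective _ heq
      exact Prod.ext (congrArg Prod.snd h2) (congrArg Prod.fst h2)
    exact blt_irrefl n n' p (this ▸ hlt)
  obtain ⟨q, hq⟩ := ((hbar.2 p hp).1) ⟨_, hswap⟩
  obtain ⟨⟨⟨hqS, hqP⟩, hexcl⟩, -, -⟩ := ((hbar.2 p hp).2) q hq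
  -- sums relation
  obtain ⟨hp1, hp2, hp3⟩ := hp
  obtain ⟨hq1, hq2, hq3⟩ := hqS
  have key := key_eq hτ
  have hsums : q.1.sum + q.2.sum = p.1.sum + p.2.sum := by omega
  have hqswap : q = (p.2, p.1) := by
    by_cases hpar : Even (n + n')
    · rw [PrecCond, if_pos hpar] at hqP
      have hle : q.2.sum ≤ p.1.sum := sum_le_of_preceq hqP.2
      rcases lt_or_eq_of_le hle with hlt | heqs
      · exfalso
        have hmem : (q.2, q.1) ∈ BipSet n δ := swap_mem' hτ ⟨hq1, hq2, hq3⟩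
        have hblt : BLt n n' (q.2, q.1) p := by
          rw [BLt, if_pos hpar]
          exact Or.inl hlt
        exact hexcl (q.2, q.1) hmem hblt (IH _ hmem (menc_lt hmem ⟨hp1, hp2, hp3⟩ hblt))
      · have e2 : q.2 = p.1 := eq_of_preceq hqP.2 heqs hq2 hp1
        have e1 : q.1 = p.2 := by
          refine (eq_of_preceq hqP.1 ?_ hp2 hq1).symm
          omega
        exact Prod.ext e1 e2
    · rw [PrecCond, if_neg hpar] at hqP
      have hle : q.1.sum ≤ p.2.sum := sum_le_of_preceq hqP.2
      rcases lt_or_eq_of_le hle with hlt | heqs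
      · exfalso
        have hmem : (q.2, q.1) ∈ BipSet n δ := swap_mem' hτ ⟨hq1, hq2, hq3⟩
        have hblt : BLt n n' (q.2, q.1) p := by
          rw [BLt, if_neg hpar]
          exact Or.inl hlt
        exact hexcl (q.2, q.1) hmem hblt (IH _ hmem (menc_lt hmem ⟨hp1, hp2, hp3⟩ hblt))
      · have e1 : q.1 = p.2 := eq_of_preceq hqP.2 heqs hq1 hp2
        have e2 : q.2 = p.1 := by
          refine (eq_of_preceq hqP.1 ?_ hp1 hq2).symm
          omega
        exact Prod.ext e1 e2
  rw [hq, hqswap]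

/-- If `τ = 0` then `θ̄(Λ)` is defined and equals `θ_0(Λ)` for every `Λ ∈ S_{n,δ}`. -/
theorem statement12 (n n' : ℕ) (δ : ℤ) (hδ : IsAdmissible δ) (hτ : tau n n' δ = 0) :
    ∀ bar : Multiset ℕ × Multiset ℕ → Option (Multiset ℕ × Multiset ℕ),
      IsThetaBar n n' δ bar → ∀ p ∈ BipSet n δ, bar p = some (thetaBip n n' δ 0 p) := by
  intro bar hbar p hp
  rw [thetaBip_zero hτ hp]
  have H : ∀ k, ∀ r ∈ BipSet n δ, menc n n' r < k → bar r = some (r.2, r.1) := by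
    intro k
    induction k with
    | zero => intro r _ h; omega
    | succ k ih =>
      intro r hr h
      exact main_step hτ bar hbar hr (fun s hs hlt => ih s hs (by omega))
  exact H (menc n n' p + 1) p hp (Nat.lt_succ_self _)

end PanUnitary
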